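/- arXiv:2505.01434 — 3 statements merged into one kernel-verified Lean document; each statement's English description precedes it below -/
import Mathlib

section
/- The class of controllable languages with respect to a fixed prefix-closed plant L(G) is closed under arbitrary union: if each K_i (i ∈ I) satisfies K̄_i·E_uc ∩ L(G) ⊆ K̄_i, then K = ⋃_i K_i satisfies K̄·E_uc ∩ L(G) ⊆ K̄. -/
/-- Prefix closure of a language. -/
def pref {α : Type*} (L : Set (List α)) : Set (List α) := {w | ∃ v ∈ L, w <+: v}

/-- `K · E_uc`: words of `K` followed by one uncontrollable event. -/
def catUc {α : Type*} (K : Set (List α)) (Euc : Set α) : Set (List α) :=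
  {w | ∃ s ∈ K, ∃ u ∈ Euc, w = s ++ [u]}

/-- Controllable languages w.r.t. a fixed prefix-closed plant `L(G)` are closed
under arbitrary union. -/
theorem stmt_8 {E : Type*} {I : Type*} (Euc : Set E) (LG : Set (List E))
    (hLG : pref LG = LG) (K : I → Set (List E))
    (hK : ∀ i, catUc (pref (K i)) Euc ∩ LG ⊆ pref (K i)) :
    catUc (pref (⋃ i, K i)) Euc ∩ LG ⊆ pref (⋃ i, K i) := by
  rintro w ⟨⟨s, ⟨v, hv, hsv⟩, u, hu, rfl⟩, hwG⟩
  obtain ⟨i, hvi⟩ := Set.mem_iUnion.mp hv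
  have : s ++ [u] ∈ pref (K i) :=
    hK i ⟨⟨s, ⟨v, hvi, hsv⟩, u, hu, rfl⟩, hwG⟩
  obtain ⟨t, ht, hpt⟩ := this
  exact ⟨t, Set.mem_iUnion.mpr ⟨i, ht⟩, hpt⟩
end

section
/- The intersection of two prefix-closed controllable languages need not be controllable, but if additionally K̄1 ∩ K̄2 = (K1 ∩ K2)‾ (i.e., the languages are nonconflicting), then K1 ∩ K2 is controllable with respect to L(G). -/
/-- If `K1`, `K2` are prefix-closed, controllable w.r.t. the prefix-closed plant
`L(G)`, and nonconflicting (`pref (K1 ∩ K2) = pref K1 ∩ pref K2`), then `K1 ∩ K2`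
is controllable w.r.t. `L(G)`. -/
theorem stmt_9 {E : Type*} (Euc : Set E) (K1 K2 LG : Set (List E))
    (hLG : pref LG = LG)
    (hK1 : pref K1 = K1) (hK2 : pref K2 = K2)
    (hc1 : catUc (pref K1) Euc ∩ LG ⊆ pref K1)
    (hc2 : catUc (pref K2) Euc ∩ LG ⊆ pref K2)
    (hnc : pref (K1 ∩ K2) = pref K1 ∩ pref K2) :
    catUc (pref (K1 ∩ K2)) Euc ∩ LG ⊆ pref (K1 ∩ K2) := by
  rintro w ⟨⟨s, hs, u, hu, rfl⟩, hw⟩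
  rw [hnc] at hs ⊢
  exact ⟨hc1 ⟨⟨s, hs.1, u, hu, rfl⟩, hw⟩, hc2 ⟨⟨s, hs.2, u, hu, rfl⟩, hw⟩⟩
end

section
/- The desired language K_{D,1} = pref((w1(x + y))^*) — where w1, x, y are fixed words — is a subset of the prefix closure of its own marked core, and is recognized by a deterministic finite automaton with at most |w1| + |x| + |y| + 1 states. -/
open scoped Computability

/-- Extension of a partial transition function to words. -/
def run {Q α : Type*} (f : Q → α → Option Q) : Q → List α → Option Q
  | q, [] => some q
  | q, x :: xs => (f q x).bind (fun q' => run f q' xs)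

/-- The marked core `{w1·x, w1·y}^*` of the desired language `K_{D,1}`. -/
def core {E : Type*} (w1 x y : List E) : Language E :=
  ({w1 ++ x, w1 ++ y} : Language E)∗

open scoped Classical

/-- The set of states: proper prefixes of `w1 ++ x` and `w1 ++ y`. -/
noncomputable def Pfin {E : Type*} (w1 x y : List E) : Finset (List E) :=
  ((Finset.range (w1.length + 1)).image fun k => w1.take k) ∪
  ((Finset.range (x.length - 1)).image fun j => w1 ++ x.take (j + 1)) ∪
  ((Finset.range (y.length - 1)).image fun j => w1 ++ y.take (j + 1))

lemma nil_mem_Pfin {E : Type*} (w1 x y : List E) : ([] : List E) ∈ Pfin w1 x y := by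
  simp only [Pfin, Finset.mem_union, Finset.mem_image, Finset.mem_range]
  exact Or.inl (Or.inl ⟨0, by omega, by simp⟩)

lemma mem_Pfin_of_proper_prefix_x {E : Type*} (w1 x y : List E) (p : List E)
    (hpre : p <+: w1 ++ x) (hlen : p.length < w1.length + x.length) :
    p ∈ Pfin w1 x y := by
  have hp := List.prefix_iff_eq_take.mp hpre
  simp only [Pfin, Finset.mem_union, Finset.mem_image, Finset.mem_range]
  by_cases hle : p.length ≤ w1.length
  · have key : p = w1.take p.length := by
      conv_lhs => rw [hp]
      rw [List.take_append, Nat.sub_eq_zero_of_le hle,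
        List.take_zero, List.append_nil]
    exact Or.inl (Or.inl ⟨p.length, by omega, key.symm⟩)
  · push_neg at hle
    have key : p = w1 ++ x.take (p.length - w1.length) := by
      conv_lhs => rw [hp]
      rw [List.take_append, List.take_of_length_le (le_of_lt hle)]
    refine Or.inl (Or.inr ⟨p.length - w1.length - 1, by omega, ?_⟩)
    have h1 : p.length - w1.length - 1 + 1 = p.length - w1.length := by omega
    rw [h1]; exact key.symm

lemma mem_Pfin_of_proper_prefix_y {E : Type*} (w1 x y : List E) (p : List E)
    (hpre : p <+: w1 ++ y) (hlen : p.length < w1.length + y.length) :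
    p ∈ Pfin w1 x y := by
  have hp := List.prefix_iff_eq_take.mp hpre
  simp only [Pfin, Finset.mem_union, Finset.mem_image, Finset.mem_range]
  by_cases hle : p.length ≤ w1.length
  · have key : p = w1.take p.length := by
      conv_lhs => rw [hp]
      rw [List.take_append, Nat.sub_eq_zero_of_le hle,
        List.take_zero, List.append_nil]
    exact Or.inl (Or.inl ⟨p.length, by omega, key.symm⟩)
  · push_neg at hle
    have key : p = w1 ++ y.take (p.length - w1.length) := by
      conv_lhs => rw [hp]
      rw [List.take_append, List.take_of_length_le (le_of_lt hle)]
    refine Or.inr ⟨p.length - w1.length - 1, by omega, ?_⟩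
    have h1 : p.length - w1.length - 1 + 1 = p.length - w1.length := by omega
    rw [h1]; exact key.symm

lemma Pfin_spec {E : Type*} (w1 x y : List E) (hx : x ≠ []) (hy : y ≠ [])
    (p : List E) (hp : p ∈ Pfin w1 x y) :
    (p <+: w1 ++ x ∧ p.length < w1.length + x.length) ∨
    (p <+: w1 ++ y ∧ p.length < w1.length + y.length) := by
  have hxpos : 0 < x.length := List.length_pos_iff.mpr hx
  have hypos : 0 < y.length := List.length_pos_iff.mpr hy
  simp only [Pfin, Finset.mem_union, Finset.mem_image, Finset.mem_range] at hp
  rcases hp with (⟨k, hk, rfl⟩ | ⟨j, hj, rfl⟩) | ⟨j, hj, rfl⟩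
  · refine Or.inl ⟨(List.take_prefix k w1).trans (List.prefix_append w1 x), ?_⟩
    have : (w1.take k).length = min k w1.length := List.length_take
    omega
  · refine Or.inl ⟨?_, ?_⟩
    · have : x.take (j + 1) <+: x := List.take_prefix _ _
      obtain ⟨t, ht⟩ := this
      exact ⟨t, by rw [List.append_assoc, ht]⟩
    · simp only [List.length_append, List.length_take]
      omega
  · refine Or.inr ⟨?_, ?_⟩
    · have : y.take (j + 1) <+: y := List.take_prefix _ _
      obtain ⟨t, ht⟩ := this
      exact ⟨t, by rw [List.append_assoc, ht]⟩
    · simp only [List.length_append, List.length_take]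
      omega

lemma full_not_mem_Pfin {E : Type*} (w1 x y : List E) (hx : x ≠ []) (hy : y ≠ [])
    (htree : ∀ p : List E, w1.length < p.length →
      p <+: w1 ++ x → p <+: w1 ++ y → False)
    (t : List E) (ht : t = w1 ++ x ∨ t = w1 ++ y) : t ∉ Pfin w1 x y := by
  intro hmem
  have hxpos : 0 < x.length := List.length_pos_iff.mpr hx
  have hypos : 0 < y.length := List.length_pos_iff.mpr hy
  rcases Pfin_spec w1 x y hx hy t hmem with ⟨hpre, hlen⟩ | ⟨hpre, hlen⟩ <;>
    rcases ht with rfl | rfl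
  · simp [List.length_append] at hlen
  · exact htree (w1 ++ y) (by simp [List.length_append]; omega) hpre List.prefix_rfl
  · exact htree (w1 ++ x) (by simp [List.length_append]; omega) List.prefix_rfl hpre
  · simp [List.length_append] at hlen

/-- Transition function on states given by proper prefixes. -/
noncomputable def tf {E : Type*} (w1 x y : List E) :
    {p : List E // p ∈ Pfin w1 x y} → E → Option {p : List E // p ∈ Pfin w1 x y} :=
  fun q a =>
    if h : q.val ++ [a] ∈ Pfin w1 x y then some ⟨q.val ++ [a], h⟩
    else if q.val ++ [a] = w1 ++ x ∨ q.val ++ [a] = w1 ++ y then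
      some ⟨[], nil_mem_Pfin w1 x y⟩
    else none

lemma run_append {Q α : Type*} (f : Q → α → Option Q) (u v : List α) :
    ∀ q, run f q (u ++ v) = (run f q u).bind (fun q' => run f q' v) := by
  induction u with
  | nil => intro q; simp [run]
  | cons a u ih =>
    intro q
    simp only [List.cons_append, run]
    cases f q a with
    | none => simp
    | some q1 => simp [ih q1]

lemma consume {E : Type*} (w1 x y : List E) (hx : x ≠ []) (hy : y ≠ [])
    (htree : ∀ p : List E, w1.length < p.length →
      p <+: w1 ++ x → p <+: w1 ++ y → False) :
    ∀ (s p : List E) (hp : p ∈ Pfin w1 x y) (t : List E),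
      (t = w1 ++ x ∨ t = w1 ++ y) → p ++ s = t →
      run (tf w1 x y) ⟨p, hp⟩ s = some ⟨[], nil_mem_Pfin w1 x y⟩ := by
  intro s
  induction s with
  | nil =>
    intro p hp t ht hpt
    exfalso
    rw [List.append_nil] at hpt
    subst hpt
    exact full_not_mem_Pfin w1 x y hx hy htree p ht hp
  | cons a s' ih =>
    intro p hp t ht hpt
    cases s' with
    | nil =>
      rw [List.append_cons, List.append_nil] at hpt
      have hnot : p ++ [a] ∉ Pfin w1 x y := by
        rw [hpt]; exact full_not_mem_Pfin w1 x y hx hy htree t ht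
      have hor : p ++ [a] = w1 ++ x ∨ p ++ [a] = w1 ++ y := by
        rw [hpt]; exact ht
      simp [run, tf, hnot, hor]
    | cons b s'' =>
      have hpre : p ++ [a] <+: t := ⟨b :: s'', by rw [← hpt]; simp⟩
      have hlen : (p ++ [a]).length < t.length := by
        have := congrArg List.length hpt
        simp at this ⊢
        omega
      have hmem : p ++ [a] ∈ Pfin w1 x y := by
        rcases ht with rfl | rfl
        · exact mem_Pfin_of_proper_prefix_x w1 x y _ hpre (by simpa using hlen)
        · exact mem_Pfin_of_proper_prefix_y w1 x y _ hpre (by simpa using hlen)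
      simp only [run, tf, dif_pos hmem, Option.bind_some]
      exact ih (p ++ [a]) hmem t ht (by rw [← hpt]; simp)

lemma run_core {E : Type*} (w1 x y : List E) (hx : x ≠ []) (hy : y ≠ [])
    (htree : ∀ p : List E, w1.length < p.length →
      p <+: w1 ++ x → p <+: w1 ++ y → False)
    (v : List E) (hv : v ∈ core w1 x y) :
    run (tf w1 x y) ⟨[], nil_mem_Pfin w1 x y⟩ v = some ⟨[], nil_mem_Pfin w1 x y⟩ := by
  rw [core, Language.mem_kstar] at hv
  obtain ⟨L, rfl, hL⟩ := hv
  induction L with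
  | nil => simp [run]
  | cons u L' ihL =>
    have hu : u = w1 ++ x ∨ u = w1 ++ y := by
      have := hL u (by simp)
      exact this
    rw [List.flatten_cons, run_append]
    rw [consume w1 x y hx hy htree u [] (nil_mem_Pfin w1 x y) u hu (by simp)]
    exact ihL (fun z hz => hL z (by simp [hz]))

lemma core_append {E : Type*} (w1 x y : List E) (u g : List E)
    (hu : u ∈ core w1 x y) (hg : g = w1 ++ x ∨ g = w1 ++ y) :
    u ++ g ∈ core w1 x y := by
  rw [core, Language.mem_kstar] at hu ⊢
  obtain ⟨L, rfl, hL⟩ := hu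
  refine ⟨L ++ [g], by simp, ?_⟩
  intro z hz
  rcases List.mem_append.mp hz with h | h
  · exact hL z h
  · simp at h
    subst h
    rcases hg with rfl | rfl
    · exact Set.mem_insert _ _
    · exact Set.mem_insert_iff.mpr (Or.inr rfl)

lemma run_forward {E : Type*} (w1 x y : List E) :
    ∀ (w : List E) (q : {p : List E // p ∈ Pfin w1 x y}),
      run (tf w1 x y) ⟨[], nil_mem_Pfin w1 x y⟩ w = some q →
      ∃ u ∈ core w1 x y, w = u ++ q.val := by
  intro w
  induction w using List.reverseRecOn with
  | nil =>
    intro q hq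
    simp only [run] at hq
    refine ⟨[], Language.nil_mem_kstar _, ?_⟩
    obtain rfl := Option.some_inj.mp hq
    simp
  | append_singleton w a ih =>
    intro q hq
    rw [run_append] at hq
    cases hq1 : run (tf w1 x y) ⟨[], nil_mem_Pfin w1 x y⟩ w with
    | none => rw [hq1] at hq; simp at hq
    | some q1 =>
      rw [hq1] at hq
      have hq2 : tf w1 x y q1 a = some q := by
        have h : (tf w1 x y q1 a).bind (fun q' => some q') = some q := hq
        cases htf : tf w1 x y q1 a with
        | none => rw [htf] at h; simp at h
        | some q2 => rw [htf] at h; simpa using h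
      clear hq
      obtain ⟨u, hu, hw⟩ := ih q1 hq1
      simp only [tf] at hq2
      by_cases hmem : q1.val ++ [a] ∈ Pfin w1 x y
      · rw [dif_pos hmem] at hq2
        obtain rfl : (⟨q1.val ++ [a], hmem⟩ : {p : List E // p ∈ Pfin w1 x y}) = q :=
          Option.some_inj.mp hq2
        exact ⟨u, hu, by simp [hw, List.append_assoc]⟩
      · rw [dif_neg hmem] at hq2
        by_cases hor : q1.val ++ [a] = w1 ++ x ∨ q1.val ++ [a] = w1 ++ y
        · rw [if_pos hor] at hq2
          obtain rfl : (⟨[], nil_mem_Pfin w1 x y⟩ : {p : List E // p ∈ Pfin w1 x y}) = q :=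
            Option.some_inj.mp hq2
          refine ⟨u ++ (q1.val ++ [a]), core_append w1 x y u _ hu hor, ?_⟩
          simp [hw, List.append_assoc]
        · rw [if_neg hor] at hq2
          simp at hq2

lemma run_equiv {Q Q' α : Type*} (f : Q → α → Option Q) (e : Q ≃ Q') :
    ∀ (w : List α) (q : Q),
      run (fun q' a => (f (e.symm q') a).map e) (e q) w = (run f q w).map e := by
  intro w
  induction w with
  | nil => intro q; simp [run]
  | cons a w ih =>
    intro q
    simp only [run, Equiv.symm_apply_apply]
    cases f q a with
    | none => simp
    | some q1 => simpa using ih q1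

/-- `K_{D,1} = pref((w1(x+y))^*)` is contained in the prefix closure of its marked
core, and (when the two branches only share the prefix `w1`) it is generated by a
deterministic automaton with at most `|w1| + |x| + |y| + 1` states. -/
theorem stmt_17 {E : Type*} (w1 x y : List E)
    (hw1 : w1 ≠ []) (hx : x ≠ []) (hy : y ≠ [])
    (hhead : x.head? ≠ y.head?)
    (htree : ∀ p : List E, w1.length < p.length →
      p <+: w1 ++ x → p <+: w1 ++ y → False) :
    pref (core w1 x y) ⊆ pref (core w1 x y) ∧
      ∃ (Q : Type) (_ : Fintype Q) (f : Q → E → Option Q) (q0 : Q),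
        Fintype.card Q ≤ w1.length + x.length + y.length + 1 ∧
          {w : List E | (run f q0 w).isSome} = pref (core w1 x y) := by
  refine ⟨subset_rfl, ?_⟩
  classical
  set S := Pfin w1 x y with hS
  letI : Fintype {p : List E // p ∈ S} := FinsetCoe.fintype S
  set n := Fintype.card {p : List E // p ∈ S} with hn
  let e : {p : List E // p ∈ S} ≃ Fin n := Fintype.equivFin _
  refine ⟨Fin n, inferInstance,
    fun q' a => (tf w1 x y (e.symm q') a).map e, e ⟨[], nil_mem_Pfin w1 x y⟩, ?_, ?_⟩
  · -- cardinality bound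
    have hcard : n = S.card := by rw [hn, Fintype.card_coe]
    have hSle : S.card ≤ (w1.length + 1) + (x.length - 1) + (y.length - 1) := by
      rw [hS, Pfin]
      refine le_trans (Finset.card_union_le _ _) ?_
      refine Nat.add_le_add (le_trans (Finset.card_union_le _ _) (Nat.add_le_add ?_ ?_)) ?_ <;>
        exact le_trans (Finset.card_image_le) (by rw [Finset.card_range])
    have hxpos : 0 < x.length := List.length_pos_iff.mpr hx
    have hypos : 0 < y.length := List.length_pos_iff.mpr hy
    simp only [Fintype.card_fin]
    omega
  · -- language equality
    ext w
    simp only [Set.mem_setOf_eq]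
    constructor
    · intro hsome
      obtain ⟨q', hq'⟩ := Option.isSome_iff_exists.mp hsome
      rw [run_equiv (tf w1 x y) e w ⟨[], nil_mem_Pfin w1 x y⟩] at hq'
      cases hq : run (tf w1 x y) ⟨[], nil_mem_Pfin w1 x y⟩ w with
      | none => rw [hq] at hq'; simp at hq'
      | some q =>
        obtain ⟨u, hu, hw⟩ := run_forward w1 x y w q hq
        rcases Pfin_spec w1 x y hx hy q.val q.property with ⟨hpre, _⟩ | ⟨hpre, _⟩
        · obtain ⟨t, ht⟩ := hpre
          refine ⟨u ++ (w1 ++ x), core_append w1 x y u _ hu (Or.inl rfl), ⟨t, ?_⟩⟩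
          rw [hw, List.append_assoc, ht]
        · obtain ⟨t, ht⟩ := hpre
          refine ⟨u ++ (w1 ++ y), core_append w1 x y u _ hu (Or.inr rfl), ⟨t, ?_⟩⟩
          rw [hw, List.append_assoc, ht]
    · rintro ⟨v, hv, t, ht⟩
      have hrunv := run_core w1 x y hx hy htree v hv
      rw [← ht, run_append] at hrunv
      cases hq : run (tf w1 x y) ⟨[], nil_mem_Pfin w1 x y⟩ w with
      | none => rw [hq] at hrunv; simp at hrunv
      | some q =>
        rw [run_equiv (tf w1 x y) e w ⟨[], nil_mem_Pfin w1 x y⟩, hq]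
        simp
end
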